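/- Let k be a perfect field of characteristic p > 0, S = k[x_1,…,x_n], e ≥ 1, I ⊆ S an ideal, and let φ : F^e_* S → S be an S-linear map with φ(F^e_* I) ⊆ I such that the induced map φ/I : F^e_*(S/I) → S/I is surjective. Then there exists an S-linear map ψ : F^e_* S → S such that: (i) ψ(F^e_* 1) = 1 (ψ is a Frobenius splitting of S); and (ii) for every ideal J' ⊆ S with I ⊆ J' and φ(F^e_* J') ⊆ J', one also has ψ(F^e_* J') ⊆ J'. -/

import Mathlib

open MvPolynomial

open Classical in
noncomputable def Phi (k : Type*) [Field k] (p e n : ℕ) [Fact p.Prime] [CharP k p]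
    [PerfectField k] : MvPolynomial (Fin n) k →+ MvPolynomial (Fin n) k :=
  (Finsupp.liftAddHom fun (γ : Fin n →₀ ℕ) =>
    if ∀ i, p ^ e ∣ γ i then
      ((monomial (γ.mapRange (· / p ^ e) (Nat.zero_div _))).toAddMonoidHom.comp
        (((iterateFrobeniusEquiv k p e).symm : k →+* k) : k →+ k))
    else 0) |>.comp AddMonoidAlgebra.coeffAddEquiv.toAddMonoidHom

theorem Phi_monomial (k : Type*) [Field k] (p e n : ℕ) [Fact p.Prime] [CharP k p]
    [PerfectField k] (γ : Fin n →₀ ℕ) (a : k) :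
    Phi k p e n (monomial γ a) =
      if ∀ i, p ^ e ∣ γ i then
        monomial (γ.mapRange (· / p ^ e) (Nat.zero_div _))
          ((iterateFrobeniusEquiv k p e).symm a)
      else 0 := by
  rw [← single_eq_monomial, Phi]
  erw [Finsupp.liftAddHom_apply_single]
  split_ifs <;> simp

theorem Phi_one (k : Type*) [Field k] (p e n : ℕ) [Fact p.Prime] [CharP k p]
    [PerfectField k] : Phi k p e n 1 = 1 := by
  rw [show (1 : MvPolynomial (Fin n) k) = monomial 0 1 by simp, Phi_monomial]
  rw [if_pos (fun i => by simp)]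
  simp

theorem Phi_semilinear (k : Type*) [Field k] (p e n : ℕ) [Fact p.Prime] [CharP k p]
    [PerfectField k] (s x : MvPolynomial (Fin n) k) :
    Phi k p e n (s ^ p ^ e * x) = s * Phi k p e n x := by
  have hq : 0 < p ^ e := pow_pos (Fact.out : p.Prime).pos e
  induction s using MvPolynomial.induction_on' generalizing x with
  | add s t hs ht =>
    rw [add_pow_char_pow, add_mul, map_add, hs, ht, add_mul]
  | monomial β c =>
    induction x using MvPolynomial.induction_on' with
    | add x y hx hy => rw [mul_add, map_add, hx, hy, map_add, mul_add]
    | monomial α d =>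
      rw [monomial_pow, monomial_mul, Phi_monomial, Phi_monomial]
      have key : ∀ i, (p ^ e ∣ (p ^ e • β + α) i ↔ p ^ e ∣ α i) := by
        intro i
        rw [Finsupp.add_apply, Finsupp.smul_apply, smul_eq_mul]
        exact Nat.dvd_add_right ⟨β i, rfl⟩
      by_cases h : ∀ i, p ^ e ∣ α i
      · have hexp : Finsupp.mapRange (· / p ^ e) (Nat.zero_div _) (p ^ e • β + α) =
            β + Finsupp.mapRange (· / p ^ e) (Nat.zero_div _) α := by
          ext i
          simp only [Finsupp.mapRange_apply, Finsupp.add_apply, Finsupp.smul_apply,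
            smul_eq_mul]
          rw [Nat.mul_add_div hq]
        have hco : (iterateFrobeniusEquiv k p e).symm (c ^ p ^ e * d) =
            c * (iterateFrobeniusEquiv k p e).symm d := by
          rw [map_mul]
          congr 1
          calc (iterateFrobeniusEquiv k p e).symm (c ^ p ^ e)
              = (iterateFrobeniusEquiv k p e).symm (iterateFrobeniusEquiv k p e c) := by
                rw [iterateFrobeniusEquiv_def]
            _ = c := RingEquiv.symm_apply_apply _ _
        rw [if_pos h, if_pos (fun i => (key i).mpr (h i)), hexp, hco, monomial_mul]
      · rw [if_neg h, if_neg (fun hall => h fun i => (key i).mp (hall i)), mul_zero]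

/-- If `φ : F^e_* S → S` is compatible with `I` and the induced map on
`S/I` is surjective, then there is a Frobenius splitting `ψ` of `S`
compatible with every `φ`-compatible ideal containing `I`. -/
theorem stmt_12 {k : Type*} [Field k] (p : ℕ) (hp : p.Prime) [CharP k p]
    [PerfectField k]
    (n e : ℕ) (he : 1 ≤ e)
    (I : Ideal (MvPolynomial (Fin n) k))
    (φ : MvPolynomial (Fin n) k → MvPolynomial (Fin n) k)
    (hadd : ∀ x y, φ (x + y) = φ x + φ y)
    (hlin : ∀ s x, φ (s ^ p ^ e * x) = s * φ x)
    (hI : ∀ x ∈ I, φ x ∈ I)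
    (hsurj : Function.Surjective
      (fun s : MvPolynomial (Fin n) k => Ideal.Quotient.mk I (φ s))) :
    ∃ ψ : MvPolynomial (Fin n) k → MvPolynomial (Fin n) k,
      (∀ x y, ψ (x + y) = ψ x + ψ y) ∧
      (∀ s x, ψ (s ^ p ^ e * x) = s * ψ x) ∧
      ψ 1 = 1 ∧
      (∀ J' : Ideal (MvPolynomial (Fin n) k),
        I ≤ J' → (∀ x ∈ J', φ x ∈ J') → ∀ x ∈ J', ψ x ∈ J') := by
  haveI := Fact.mk hp
  obtain ⟨u, hu⟩ := hsurj 1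
  simp only at hu
  have hi : φ u - 1 ∈ I := Ideal.Quotient.eq.mp
    (by rw [hu]; exact ((Ideal.Quotient.mk I).map_one).symm)
  refine ⟨fun x => φ (u * x) - (φ u - 1) * Phi k p e n x, ?_, ?_, ?_, ?_⟩
  · intro x y
    dsimp only
    rw [mul_add, hadd, map_add, mul_add]
    ring
  · intro s x
    dsimp only
    rw [show u * (s ^ p ^ e * x) = s ^ p ^ e * (u * x) by ring, hlin,
      Phi_semilinear]
    ring
  · dsimp only
    rw [mul_one, Phi_one, mul_one]
    ring
  · intro J' hIJ hcomp x hx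
    exact sub_mem (hcomp _ (J'.mul_mem_left u hx))
      (Ideal.mul_mem_right _ _ (hIJ hi))
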